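/- With K, C, Φ as above (C unimodular Gram matrix, Φ = -C^{-1}C^T), the map y ↦ ⟨y, -⟩ gives an isomorphism from the subgroup K^{⟨Φ⟩} := {y ∈ K : Φy = -y} onto the dual group Hom(coker(1+Φ), Z), yielding an exact sequence 0 → Hom(coker(1+Φ), Z) → K --(1+Φ)--> K → coker(1+Φ) → 0. -/

import Mathlib

set_option maxHeartbeats 1000000

abbrev cokerG {m : Type} [Fintype m] [DecidableEq m] (S : Matrix m m ℤ) :=
  (m → ℤ) ⧸ LinearMap.range S.mulVecLin

/-- dot product with a fixed vector, as a linear map -/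
def dform {n : ℕ} (v : Fin n → ℤ) : (Fin n → ℤ) →ₗ[ℤ] ℤ where
  toFun x := dotProduct v x
  map_add' x y := dotProduct_add v x y
  map_smul' c x := dotProduct_smul c v x

theorem fixed_subgroup_iso_dual_of_coker (n : ℕ) (C : Matrix (Fin n) (Fin n) ℤ)
    (hC : C.det = 1 ∨ C.det = -1) :
    ∃ e : LinearMap.ker (Matrix.mulVecLin (1 + -(C⁻¹ * C.transpose))) ≃ₗ[ℤ]
        Module.Dual ℤ (cokerG (1 + -(C⁻¹ * C.transpose))),
      ∀ (y : LinearMap.ker (Matrix.mulVecLin (1 + -(C⁻¹ * C.transpose))))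
        (x : Fin n → ℤ),
        e y (Submodule.Quotient.mk x) = dotProduct (y : Fin n → ℤ) (C.mulVec x) := by
  have hunit : IsUnit C.det := by
    rcases hC with h | h <;> simp [h]
  have hCC : C * C⁻¹ = 1 := Matrix.mul_nonsing_inv C hunit
  have hCC' : C⁻¹ * C = 1 := Matrix.nonsing_inv_mul C hunit
  set S : Matrix (Fin n) (Fin n) ℤ := 1 + -(C⁻¹ * C.transpose) with hSdef
  have hCS : C * S = C - C.transpose := by
    rw [hSdef, Matrix.mul_add, Matrix.mul_one, Matrix.mul_neg, ← Matrix.mul_assoc,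
      hCC, Matrix.one_mul, sub_eq_add_neg]
  have hStCt : S.transpose * C.transpose = C.transpose - C := by
    have h1 : (C * S).transpose = S.transpose * C.transpose := Matrix.transpose_mul C S
    rw [hCS] at h1
    rw [← h1, Matrix.transpose_sub, Matrix.transpose_transpose]
  -- membership in the kernel means Cᵀ y = C y
  have hker : ∀ y : Fin n → ℤ, S.mulVec y = 0 ↔
      C.transpose.mulVec y = C.mulVec y := by
    intro y
    constructor
    · intro h
      have h1 : y - (C⁻¹ * C.transpose).mulVec y = 0 := by
        simpa [hSdef, Matrix.add_mulVec, Matrix.neg_mulVec, sub_eq_add_neg] using h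
      have h2 : (C⁻¹ * C.transpose).mulVec y = y := (sub_eq_zero.mp h1).symm
      calc C.transpose.mulVec y = ((C * C⁻¹) * C.transpose).mulVec y := by
            rw [hCC, Matrix.one_mul]
        _ = C.mulVec ((C⁻¹ * C.transpose).mulVec y) := by
            rw [Matrix.mulVec_mulVec, Matrix.mul_assoc]
        _ = C.mulVec y := by rw [h2]
    · intro h
      have h2 : (C⁻¹ * C.transpose).mulVec y = y := by
        calc (C⁻¹ * C.transpose).mulVec y = C⁻¹.mulVec (C.transpose.mulVec y) := by
              rw [Matrix.mulVec_mulVec]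
          _ = C⁻¹.mulVec (C.mulVec y) := by rw [h]
          _ = (C⁻¹ * C).mulVec y := by rw [Matrix.mulVec_mulVec]
          _ = y := by rw [hCC', Matrix.one_mulVec]
      simp [hSdef, Matrix.add_mulVec, Matrix.neg_mulVec, h2]
  -- the forms vanish on the image of S
  have hvanish : ∀ y : LinearMap.ker S.mulVecLin,
      LinearMap.range S.mulVecLin ≤
        LinearMap.ker (dform (C.transpose.mulVec (y : Fin n → ℤ))) := by
    rintro ⟨y, hy⟩ _ ⟨x, rfl⟩
    have hy' : C.transpose.mulVec y = C.mulVec y :=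
      (hker y).mp (by simpa using hy)
    simp only [LinearMap.mem_ker, dform, LinearMap.coe_mk, AddHom.coe_mk,
      Matrix.mulVecLin_apply]
    rw [Matrix.dotProduct_mulVec, ← Matrix.mulVec_transpose, Matrix.mulVec_mulVec,
      hStCt, Matrix.sub_mulVec, hy', sub_self, zero_dotProduct]
  let e0 : LinearMap.ker S.mulVecLin →ₗ[ℤ] Module.Dual ℤ (cokerG S) :=
    { toFun := fun y =>
        Submodule.liftQ _ (dform (C.transpose.mulVec (y : Fin n → ℤ))) (hvanish y)
      map_add' := by
        intro a b
        apply Submodule.linearMap_qext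
        refine LinearMap.ext fun x => ?_
        simp [dform, Matrix.mulVec_add, add_dotProduct]
      map_smul' := by
        intro c a
        apply Submodule.linearMap_qext
        refine LinearMap.ext fun x => ?_
        have hca : ((c • a : _) : Fin n → ℤ) = c • (a : Fin n → ℤ) := rfl
        simp only [LinearMap.comp_apply, Submodule.mkQ_apply, Submodule.liftQ_apply,
          LinearMap.smul_apply, RingHom.id_apply, hca, dform, LinearMap.coe_mk,
          AddHom.coe_mk, Matrix.mulVec_smul, smul_dotProduct, smul_eq_mul] }
  have hinj : Function.Injective e0 := by
    rw [← LinearMap.ker_eq_bot]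
    apply (Submodule.eq_bot_iff _).mpr
    rintro ⟨y, hy⟩ h
    have hzero : ∀ x : Fin n → ℤ, dotProduct (C.transpose.mulVec y) x = 0 := by
      intro x
      have := congrArg (fun f => f (Submodule.Quotient.mk x)) (LinearMap.mem_ker.mp h)
      simpa [e0, dform] using this
    have hCy : C.transpose.mulVec y = 0 := by
      funext i
      simpa using hzero (Pi.single i 1)
    have hy0 : y = 0 := by
      have h2 : ((C.transpose)⁻¹ * C.transpose).mulVec y = 0 := by
        have := congrArg (fun v => (C.transpose)⁻¹.mulVec v) hCy
        simpa [Matrix.mulVec_mulVec] using this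
      rwa [Matrix.nonsing_inv_mul _ (by simpa using hunit), Matrix.one_mulVec] at h2
    simp [hy0]
  have hsurj : Function.Surjective e0 := by
    intro f
    set g : (Fin n → ℤ) →ₗ[ℤ] ℤ := f.comp (Submodule.mkQ _) with hg
    set v : Fin n → ℤ := fun i => g (Pi.single i 1) with hv
    have hgv : ∀ x, g x = dotProduct v x := by
      intro x
      have hx : x = ∑ i, x i • Pi.single i (1:ℤ) := by
        funext j
        simp [Pi.single_apply, Finset.sum_apply, mul_comm]
      calc g x = g (∑ i, x i • Pi.single i (1:ℤ)) := by rw [← hx]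
        _ = ∑ i, x i * g (Pi.single i 1) := by
            rw [map_sum]
            exact Finset.sum_congr rfl fun i _ => by rw [map_smul, smul_eq_mul]
        _ = dotProduct v x := by simp [dotProduct, hv, mul_comm]
    have hgS : ∀ x, g (S.mulVec x) = 0 := by
      intro x
      have hmk : (Submodule.mkQ (LinearMap.range S.mulVecLin)) (S.mulVec x) = 0 := by
        rw [Submodule.mkQ_apply, Submodule.Quotient.mk_eq_zero]
        exact ⟨x, rfl⟩
      rw [hg, LinearMap.comp_apply, hmk, map_zero]
    have hSv : S.transpose.mulVec v = 0 := by
      funext i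
      have h1 := hgS (Pi.single i 1)
      rw [hgv, Matrix.dotProduct_mulVec, ← Matrix.mulVec_transpose] at h1
      simpa using h1
    set y : Fin n → ℤ := (C.transpose)⁻¹.mulVec v with hy
    have hCty : C.transpose.mulVec y = v := by
      rw [hy, Matrix.mulVec_mulVec, Matrix.mul_nonsing_inv _ (by simpa using hunit),
        Matrix.one_mulVec]
    have hCyv : C.mulVec y = v := by
      have hSt : S.transpose = 1 - C * (C.transpose)⁻¹ := by
        rw [hSdef]
        rw [Matrix.transpose_add, Matrix.transpose_neg, Matrix.transpose_mul,
          Matrix.transpose_transpose, Matrix.transpose_nonsing_inv, Matrix.transpose_one,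
          sub_eq_add_neg]
      rw [hSt, Matrix.sub_mulVec, Matrix.one_mulVec] at hSv
      have h2 : (C * (C.transpose)⁻¹).mulVec v = v := (sub_eq_zero.mp hSv).symm
      rw [hy, Matrix.mulVec_mulVec, h2]
    have hymem : y ∈ LinearMap.ker S.mulVecLin := by
      rw [LinearMap.mem_ker, Matrix.mulVecLin_apply, hker, hCty, hCyv]
    refine ⟨⟨y, hymem⟩, ?_⟩
    apply Submodule.linearMap_qext
    refine LinearMap.ext fun x => ?_
    simp only [e0, LinearMap.coe_mk, AddHom.coe_mk, LinearMap.comp_apply,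
      Submodule.mkQ_apply, Submodule.liftQ_apply, dform]
    rw [hCty]
    exact (hgv x).symm
  refine ⟨LinearEquiv.ofBijective e0 ⟨hinj, hsurj⟩, ?_⟩
  intro y x
  simp only [LinearEquiv.ofBijective_apply, e0, LinearMap.coe_mk, AddHom.coe_mk,
    Submodule.liftQ_apply, dform]
  rw [Matrix.dotProduct_mulVec, ← Matrix.mulVec_transpose]
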